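/- arXiv:1803.09654 — 2 statements merged into one kernel-verified Lean document; each statement's English description precedes it below -/
import Mathlib

section
/- Let φ : (0,ε) → ℂⁿ be a real-analytic curve, g₁,…,g_p polynomials with gⱼ(φ(s)) = 0 for all j and s, and suppose there are analytic functions λ₁,…,λ_{p+1} : (0,ε) → ℂ with ∑_{j=1}^p λⱼ(s)∇gⱼ(φ(s)) = λ_{p+1}(s)·φ(s) for all s. Then for all s ∈ (0,ε), the conjugate of λ_{p+1}(s) times d(‖φ(s)‖²)/ds equals 0. In particular, if λ_{p+1} is not identically zero, then ‖φ(s)‖ is constant on some subinterval. -/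
open MvPolynomial

/-- The (conjugated) gradient of a polynomial `g : ℂⁿ → ℂ` at `x`. -/
noncomputable def cgrad {n : ℕ} (g : MvPolynomial (Fin n) ℂ) (x : Fin n → ℂ) : Fin n → ℂ :=
  fun i => starRingEnd ℂ (eval x (pderiv i g))

/-- The Hermitian norm `‖x‖ = √(∑ |xᵢ|²)` on `ℂⁿ`. -/
noncomputable def hnorm {n : ℕ} (x : Fin n → ℂ) : ℝ :=
  Real.sqrt (∑ i, Complex.normSq (x i))

theorem my_hasDerivAt_mveval {n : ℕ} (P : MvPolynomial (Fin n) ℂ) {f : ℝ → Fin n → ℂ}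
    {f' : Fin n → ℂ} {s : ℝ} (hf : ∀ i, HasDerivAt (fun t => f t i) (f' i) s) :
    HasDerivAt (fun t => eval (f t) P) (∑ i, eval (f s) (pderiv i P) * f' i) s := by
  induction P using MvPolynomial.induction_on with
  | C a =>
      simp only [eval_C, pderiv_C, map_zero, zero_mul, Finset.sum_const_zero]
      exact hasDerivAt_const s a
  | add p q hp hq =>
      simp only [eval_add, map_add, add_mul, Finset.sum_add_distrib]
      exact hp.add hq
  | mul_X p i hp =>
      have h : HasDerivAt (fun t => eval (f t) p * f t i) _ s := hp.fun_mul (hf i)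
      have hfun : (fun t => eval (f t) (p * X i)) = fun t => eval (f t) p * f t i := by
        funext t; simp [eval_mul]
      rw [hfun]
      convert h using 1
      simp only [pderiv_mul, map_add, eval_mul, eval_X, add_mul, Finset.sum_add_distrib,
        Finset.mul_sum, Finset.sum_mul]
      congr 1
      · apply Finset.sum_congr rfl; intro j _; ring
      · rw [Finset.sum_eq_single i]
        · simp
        · intro j _ hj; simp [pderiv_X, Pi.single_eq_of_ne hj.symm]
        · simp

/-- If an analytic curve `φ` stays in `S = {g₁ = ⋯ = g_p = 0}` and
`∑_{j=1}^p λⱼ(s) ∇gⱼ(φ(s)) = λ_{p+1}(s) φ(s)`, then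
`conj(λ_{p+1}(s)) · d(‖φ(s)‖²)/ds = 0` on `(0,ε)`; in particular, if `λ_{p+1}`
is not identically zero then `‖φ(s)‖` is constant on some subinterval. -/
theorem tangency_curve_norm_constant (n p : ℕ) (ε : ℝ) (hε : 0 < ε)
    (φ : ℝ → Fin n → ℂ) (hφ : ∀ s ∈ Set.Ioo 0 ε, AnalyticAt ℝ φ s)
    (lam : Fin (p + 1) → ℝ → ℂ) (hlam : ∀ j, ∀ s ∈ Set.Ioo 0 ε, AnalyticAt ℝ (lam j) s)
    (g : Fin p → MvPolynomial (Fin n) ℂ)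
    (hg : ∀ j, ∀ s ∈ Set.Ioo 0 ε, eval (φ s) (g j) = 0)
    (heq : ∀ s ∈ Set.Ioo 0 ε,
      (∑ j : Fin p, lam j.castSucc s • cgrad (g j) (φ s)) = lam (Fin.last p) s • φ s) :
    (∀ s ∈ Set.Ioo 0 ε,
      starRingEnd ℂ (lam (Fin.last p) s) *
        ((deriv (fun t => ∑ i, Complex.normSq (φ t i)) s : ℝ) : ℂ) = 0) ∧
    ((¬ ∀ s ∈ Set.Ioo 0 ε, lam (Fin.last p) s = 0) →
      ∃ a b : ℝ, 0 ≤ a ∧ a < b ∧ b ≤ ε ∧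
        ∀ s ∈ Set.Ioo a b, ∀ t ∈ Set.Ioo a b, hnorm (φ s) = hnorm (φ t)) := by
  set N : ℝ → ℝ := fun t => ∑ i, Complex.normSq (φ t i) with hNdef
  set L : ℝ → ℂ := fun t => lam (Fin.last p) t with hLdef
  have key : ∀ s ∈ Set.Ioo (0:ℝ) ε,
      HasDerivAt N (2 * (∑ i, deriv (fun t => φ t i) s * starRingEnd ℂ (φ s i)).re) s ∧
      starRingEnd ℂ (L s) * (∑ i, deriv (fun t => φ t i) s * starRingEnd ℂ (φ s i)) = 0 := by
    intro s hs
    set d : Fin n → ℂ := fun i => deriv (fun t => φ t i) s with hd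
    have hdi : ∀ i, HasDerivAt (fun t => φ t i) (d i) s := fun i =>
      (differentiableAt_pi.mp (hφ s hs).differentiableAt i).hasDerivAt
    have hconj : ∀ i, HasDerivAt (fun t => starRingEnd ℂ (φ t i)) (starRingEnd ℂ (d i)) s :=
      fun i => (hdi i).star
    have hmul : ∀ i, HasDerivAt (fun t => Complex.normSq (φ t i))
        ((d i * starRingEnd ℂ (φ s i) + φ s i * starRingEnd ℂ (d i)).re) s := by
      intro i
      have h1 := Complex.reCLM.hasFDerivAt.comp_hasDerivAt s ((hdi i).mul (hconj i))
      have h2 : (Complex.reCLM ∘ ((fun t => φ t i) * fun t => starRingEnd ℂ (φ t i))) =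
          fun t => Complex.normSq (φ t i) := by
        funext t; simp [Function.comp, Complex.mul_conj]
      rw [h2] at h1
      exact h1
    have hNderiv : HasDerivAt N
        (2 * (∑ i, d i * starRingEnd ℂ (φ s i)).re) s := by
      have h3 : HasDerivAt N
          (∑ i ∈ Finset.univ, (d i * starRingEnd ℂ (φ s i) + φ s i * starRingEnd ℂ (d i)).re) s :=
        HasDerivAt.fun_sum (fun i _ => hmul i)
      convert h3 using 1
      rw [Complex.re_sum, Finset.mul_sum]
      apply Finset.sum_congr rfl
      intro i _
      simp only [Complex.add_re, Complex.mul_re, Complex.conj_re, Complex.conj_im]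
      ring
    refine ⟨hNderiv, ?_⟩
    -- tangency : derivative of g j along the curve is zero
    have hgd : ∀ j, ∑ i, eval (φ s) (pderiv i (g j)) * d i = 0 := by
      intro j
      have h1 := my_hasDerivAt_mveval (g j) hdi
      have h2 : (fun t => eval (φ t) (g j)) =ᶠ[nhds s] fun _ => (0:ℂ) := by
        filter_upwards [isOpen_Ioo.mem_nhds hs] with t ht using hg j t ht
      have h3 : HasDerivAt (fun _ : ℝ => (0:ℂ))
          (∑ i, eval (φ s) (pderiv i (g j)) * d i) s := h1.congr_of_eventuallyEq h2.symm
      have h4 := h3.unique (hasDerivAt_const s 0)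
      exact h4
    have he := heq s hs
    calc starRingEnd ℂ (L s) * (∑ i, d i * starRingEnd ℂ (φ s i))
        = ∑ i, d i * starRingEnd ℂ ((lam (Fin.last p) s • φ s) i) := by
          rw [Finset.mul_sum]
          apply Finset.sum_congr rfl
          intro i _
          simp only [Pi.smul_apply, smul_eq_mul, map_mul, hLdef]
          ring
      _ = ∑ i, d i * starRingEnd ℂ ((∑ j : Fin p, lam j.castSucc s • cgrad (g j) (φ s)) i) := by
          rw [he]
      _ = ∑ j : Fin p, starRingEnd ℂ (lam j.castSucc s) *
            (∑ i, eval (φ s) (pderiv i (g j)) * d i) := by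
          simp only [Finset.sum_apply, Pi.smul_apply, smul_eq_mul, map_sum, map_mul,
            cgrad, starRingEnd_self_apply, Finset.mul_sum]
          rw [Finset.sum_comm]
          apply Finset.sum_congr rfl; intro j _
          apply Finset.sum_congr rfl; intro i _
          ring
      _ = 0 := by simp [hgd]
  constructor
  · intro s hs
    obtain ⟨hNd, horth⟩ := key s hs
    by_cases h0 : lam (Fin.last p) s = 0
    · simp [h0]
    · have hA : (∑ i, deriv (fun t => φ t i) s * starRingEnd ℂ (φ s i)) = 0 := by
        rcases mul_eq_zero.mp horth with h | h
        · exact absurd (by simpa using h) h0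
        · exact h
      rw [hNd.deriv, hA]
      simp
  · intro hne
    push_neg at hne
    obtain ⟨s₀, hs₀, h0⟩ := hne
    have hcont : ContinuousAt L s₀ := (hlam (Fin.last p) s₀ hs₀).continuousAt
    have hev : ∀ᶠ t in nhds s₀, L t ≠ 0 ∧ t ∈ Set.Ioo (0:ℝ) ε :=
      (hcont.eventually_ne h0).and (isOpen_Ioo.mem_nhds hs₀)
    obtain ⟨r, hr, hball⟩ := Metric.eventually_nhds_iff_ball.mp hev
    refine ⟨max 0 (s₀ - r), min ε (s₀ + r), le_max_left _ _, ?_, min_le_left _ _, ?_⟩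
    · exact lt_of_le_of_lt (le_of_lt (max_lt hs₀.1 (by linarith))) (lt_min hs₀.2 (by linarith))
    · set a := max 0 (s₀ - r) with ha
      set b := min ε (s₀ + r) with hb
      have hmem : ∀ x ∈ Set.Ioo a b, L x ≠ 0 ∧ x ∈ Set.Ioo (0:ℝ) ε := by
        intro x hx
        apply hball
        rw [Metric.mem_ball, Real.dist_eq, abs_sub_lt_iff]
        constructor
        · have : x < s₀ + r := lt_of_lt_of_le hx.2 (min_le_right _ _)
          linarith
        · have : s₀ - r < x := lt_of_le_of_lt (le_max_right 0 (s₀ - r)) hx.1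
          linarith
      have hderiv0 : ∀ x ∈ Set.Ioo a b, HasDerivAt N 0 x := by
        intro x hx
        obtain ⟨hLx, hxε⟩ := hmem x hx
        obtain ⟨hNd, horth⟩ := key x hxε
        have hA : (∑ i, deriv (fun t => φ t i) x * starRingEnd ℂ (φ x i)) = 0 := by
          rcases mul_eq_zero.mp horth with h | h
          · exact absurd (by simpa using h) hLx
          · exact h
        rw [hA] at hNd
        simpa using hNd
      have hconst : ∀ x ∈ Set.Ioo a b, ∀ y ∈ Set.Ioo a b, N x = N y := by
        intro x hx y hy
        apply (convex_Ioo a b).is_const_of_fderivWithin_eq_zero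
          (fun z hz => ((hderiv0 z hz).differentiableAt).differentiableWithinAt)
          ?_ hx hy
        intro z hz
        rw [fderivWithin_of_isOpen isOpen_Ioo hz]
        have hF : HasFDerivAt N (0 : ℝ →L[ℝ] ℝ) z := by
          have := (hderiv0 z hz).hasFDerivAt
          simpa using this
        exact hF.fderiv
      intro s hs t ht
      have := hconst s hs t ht
      simp only [hnorm]
      exact congrArg Real.sqrt this
end

section
/- Let φ : (0,ε) → ℂⁿ, λⱼ : (0,ε) → ℂ (j = 1,…,p+1) be analytic, f, g₁,…,g_p polynomials with gⱼ∘φ ≡ 0 for all j, and ∇f(φ(s)) + ∑_{j=1}^p λⱼ(s)∇gⱼ(φ(s)) = λ_{p+1}(s)φ(s) for all s ∈ (0,ε). If λ_{p+1} is not identically zero, then the real part of (1/conj(λ_{p+1}(s)))·d(f∘φ)/ds equals (1/2)·d(‖φ(s)‖²)/ds wherever λ_{p+1}(s) ≠ 0. In particular, if moreover ‖φ(s)‖ is not eventually constant, then f∘φ is not constant. -/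
open MvPolynomial

/-- Chain rule for polynomial evaluation along a differentiable curve. -/
lemma hasDerivAt_eval_comp {n : ℕ} (h : MvPolynomial (Fin n) ℂ)
    (φ : ℝ → Fin n → ℂ) (φ' : Fin n → ℂ) (s : ℝ)
    (hd : ∀ i, HasDerivAt (fun t => φ t i) (φ' i) s) :
    HasDerivAt (fun t => eval (φ t) h) (∑ i, φ' i * eval (φ s) (pderiv i h)) s := by
  induction h using MvPolynomial.induction_on with
  | C a => simpa using hasDerivAt_const s (a : ℂ)
  | add p q hp hq =>
      simpa [mul_add, Finset.sum_add_distrib] using hp.fun_add hq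
  | mul_X p j hp =>
      have key := hp.fun_mul (hd j)
      have : (∑ i, φ' i * eval (φ s) (pderiv i (p * X j)))
          = (∑ i, φ' i * eval (φ s) (pderiv i p)) * φ s j + eval (φ s) p * φ' j := by
        simp only [pderiv_mul, pderiv_X, map_add, map_mul, eval_X, mul_add, Finset.sum_add_distrib,
          Finset.sum_mul]
        congr 1
        · exact Finset.sum_congr rfl fun i _ => by ring
        · rw [Finset.sum_eq_single j]
          · simp [mul_comm]
          · intro b _ hb; simp [Pi.single_apply, hb]
          · simp
      rw [this]
      simpa using key

/-- Along an analytic curve in `S = {g₁ = ⋯ = g_p = 0}` with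
`∇f(φ(s)) + ∑ λⱼ(s) ∇gⱼ(φ(s)) = λ_{p+1}(s) φ(s)`, if `λ_{p+1} ≢ 0` then
`Re((1/conj λ_{p+1}(s)) · d(f∘φ)/ds) = (1/2) d(‖φ(s)‖²)/ds` wherever
`λ_{p+1}(s) ≠ 0`; in particular, if `‖φ(s)‖` is not eventually constant, then
`f∘φ` is not constant. -/
theorem tangency_curve_re_deriv (n p : ℕ) (ε : ℝ) (hε : 0 < ε)
    (φ : ℝ → Fin n → ℂ) (hφ : ∀ s ∈ Set.Ioo 0 ε, AnalyticAt ℝ φ s)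
    (lam : Fin (p + 1) → ℝ → ℂ) (hlam : ∀ j, ∀ s ∈ Set.Ioo 0 ε, AnalyticAt ℝ (lam j) s)
    (f : MvPolynomial (Fin n) ℂ) (g : Fin p → MvPolynomial (Fin n) ℂ)
    (hg : ∀ j, ∀ s ∈ Set.Ioo 0 ε, eval (φ s) (g j) = 0)
    (heq : ∀ s ∈ Set.Ioo 0 ε,
      cgrad f (φ s) + (∑ j : Fin p, lam j.castSucc s • cgrad (g j) (φ s))
        = lam (Fin.last p) s • φ s)
    (hne : ¬ ∀ s ∈ Set.Ioo 0 ε, lam (Fin.last p) s = 0) :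
    (∀ s ∈ Set.Ioo 0 ε, lam (Fin.last p) s ≠ 0 →
      ((1 / starRingEnd ℂ (lam (Fin.last p) s)) *
          deriv (fun t => eval (φ t) f) s).re
        = (1 / 2) * deriv (fun t => ∑ i, Complex.normSq (φ t i)) s) ∧
    ((¬ ∃ a : ℝ, 0 < a ∧ a ≤ ε ∧
        ∀ s ∈ Set.Ioo 0 a, ∀ t ∈ Set.Ioo 0 a, hnorm (φ s) = hnorm (φ t)) →
      ¬ ∃ c : ℂ, ∀ s ∈ Set.Ioo 0 ε, eval (φ s) f = c) := by
  set I := Set.Ioo (0:ℝ) ε with hI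
  have hIopen : IsOpen I := isOpen_Ioo
  set L : ℝ → ℂ := lam (Fin.last p) with hL
  have hφi : ∀ i : Fin n, AnalyticOnNhd ℝ (fun t => φ t i) I := fun i s hs =>
    ((ContinuousLinearMap.proj i : (Fin n → ℂ) →L[ℝ] ℂ).analyticAt _).comp (hφ s hs)
  set D : ℝ → Fin n → ℂ := fun s i => deriv (fun t => φ t i) s with hDdef
  have hD : ∀ s ∈ I, ∀ i, HasDerivAt (fun t => φ t i) (D s i) s := fun s hs i =>
    ((hφi i s hs).differentiableAt).hasDerivAt
  set A : ℝ → ℂ := fun s => ∑ i, D s i * starRingEnd ℂ (φ s i) with hAdef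
  have hzero : ∀ (j : Fin p), ∀ s ∈ I, (∑ i, D s i * eval (φ s) (pderiv i (g j))) = 0 := by
    intro j s hs
    have hder := hasDerivAt_eval_comp (g j) φ (D s) s (hD s hs)
    have hev : (fun t => eval (φ t) (g j)) =ᶠ[nhds s] (fun _ => (0:ℂ)) :=
      Filter.eventuallyEq_of_mem (hIopen.mem_nhds hs) (hg j)
    exact (hder.congr_of_eventuallyEq hev.symm).unique (hasDerivAt_const s (0:ℂ))
  -- key derivative identity for f ∘ φ
  have key1 : ∀ s ∈ I, HasDerivAt (fun t => eval (φ t) f)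
      (starRingEnd ℂ (L s) * A s) s := by
    intro s hs
    have hder := hasDerivAt_eval_comp f φ (D s) s (hD s hs)
    have hcoord : ∀ i, eval (φ s) (pderiv i f)
        = starRingEnd ℂ (L s) * starRingEnd ℂ (φ s i)
          - ∑ j, starRingEnd ℂ (lam j.castSucc s) * eval (φ s) (pderiv i (g j)) := by
      intro i
      have h1 := congrFun (heq s hs) i
      simp only [cgrad, Pi.add_apply, Finset.sum_apply, Pi.smul_apply, smul_eq_mul] at h1
      have h2 := congrArg (starRingEnd ℂ) h1
      simp only [map_add, map_sum, map_mul, RingHomCompTriple.comp_apply,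
        Complex.conj_conj] at h2
      rw [eq_sub_iff_add_eq]
      convert h2 using 2 <;> simp
    have hsum : (∑ i, D s i * eval (φ s) (pderiv i f)) = starRingEnd ℂ (L s) * A s := by
      calc (∑ i, D s i * eval (φ s) (pderiv i f))
          = (∑ i, D s i * (starRingEnd ℂ (L s) * starRingEnd ℂ (φ s i)))
            - ∑ i, ∑ j, starRingEnd ℂ (lam j.castSucc s)
                * (D s i * eval (φ s) (pderiv i (g j))) := by
            simp only [hcoord, mul_sub, Finset.mul_sum, Finset.sum_sub_distrib]
            congr 1
            exact Finset.sum_congr rfl fun i _ => Finset.sum_congr rfl fun j _ => by ring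
        _ = starRingEnd ℂ (L s) * A s
            - ∑ j, starRingEnd ℂ (lam j.castSucc s)
                * ∑ i, D s i * eval (φ s) (pderiv i (g j)) := by
            rw [Finset.sum_comm]
            simp only [hAdef, Finset.mul_sum]
            congr 1
            exact Finset.sum_congr rfl fun i _ => by ring
        _ = starRingEnd ℂ (L s) * A s := by
            simp only [hzero _ s hs, mul_zero, Finset.sum_const_zero, sub_zero]
    rw [← hsum]
    exact hder
  -- derivative of the squared norm
  have key2 : ∀ s ∈ I, HasDerivAt (fun t => ∑ i, Complex.normSq (φ t i))
      (2 * (A s).re) s := by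
    intro s hs
    have h1 : ∀ i : Fin n, HasDerivAt (fun t => Complex.normSq (φ t i))
        (2 * (D s i * starRingEnd ℂ (φ s i)).re) s := by
      intro i
      have hm : HasDerivAt (fun t => φ t i * starRingEnd ℂ (φ t i))
          (D s i * starRingEnd ℂ (φ s i) + φ s i * starRingEnd ℂ (D s i)) s :=
        (hD s hs i).mul ((hD s hs i).star)
      have hre := (Complex.reCLM.hasFDerivAt.comp_hasDerivAt s hm)
      have hfun : (fun t => Complex.reCLM (φ t i * starRingEnd ℂ (φ t i)))
          = fun t => Complex.normSq (φ t i) := by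
        funext t; simp [Complex.mul_conj]
      simp only [Function.comp_def] at hre
      rw [hfun] at hre
      refine hre.congr_deriv ?_
      simp [Complex.add_re, Complex.mul_re, Complex.conj_re, Complex.conj_im]
      ring
    have := HasDerivAt.fun_sum (u := Finset.univ) (fun i _ => h1 i)
    refine this.congr_deriv ?_
    simp [hAdef, Complex.re_sum, Finset.mul_sum]
  constructor
  · -- Part 1
    intro s hs hLs
    have hc : starRingEnd ℂ (L s) ≠ 0 := by simpa using hLs
    rw [(key1 s hs).deriv, (key2 s hs).deriv]
    have : (1 / starRingEnd ℂ (L s)) * (starRingEnd ℂ (L s) * A s) = A s := by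
      field_simp
    rw [this]; ring
  · -- Part 2
    rintro hnotconst ⟨c, hc⟩
    apply hnotconst
    have hderiv0 : ∀ s ∈ I, starRingEnd ℂ (L s) * A s = 0 := by
      intro s hs
      have hev : (fun t => eval (φ t) f) =ᶠ[nhds s] (fun _ => c) :=
        Filter.eventuallyEq_of_mem (hIopen.mem_nhds hs) hc
      exact ((key1 s hs).congr_of_eventuallyEq hev.symm).unique (hasDerivAt_const s c)
    push_neg at hne
    obtain ⟨s₀, hs₀, hLs₀⟩ := hne
    have hAev : A =ᶠ[nhds s₀] 0 := by
      have hevne : ∀ᶠ t in nhds s₀, L t ≠ 0 :=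
        ((hlam (Fin.last p) s₀ hs₀).continuousAt).eventually_ne hLs₀
      have hevI : ∀ᶠ t in nhds s₀, t ∈ I := hIopen.mem_nhds hs₀
      filter_upwards [hevne, hevI] with t h1 h2
      have h3 := hderiv0 t h2
      have h4 : starRingEnd ℂ (L t) ≠ 0 := by simpa using h1
      rcases mul_eq_zero.mp h3 with h | h
      · exact absurd h h4
      · exact h
    have hA : AnalyticOnNhd ℝ A I := by
      intro s hs
      apply Finset.analyticAt_fun_sum
      intro i _
      have hd : AnalyticAt ℝ (fun t => deriv (fun u => φ u i) t) s := (hφi i).deriv s hs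
      have hconj : AnalyticAt ℝ (fun t => starRingEnd ℂ (φ t i)) s :=
        (Complex.conjCLE.toContinuousLinearMap.analyticAt _).comp (hφi i s hs)
      exact hd.mul hconj
    have hAzero : Set.EqOn A 0 I :=
      hA.eqOn_zero_of_preconnected_of_eventuallyEq_zero isPreconnected_Ioo hs₀ hAev
    -- the squared norm is constant on I
    have hNconst : ∀ x ∈ I, ∀ y ∈ I,
        (∑ i, Complex.normSq (φ x i)) = (∑ i, Complex.normSq (φ y i)) := by
      intro x hx y hy
      refine Convex.is_const_of_fderivWithin_eq_zero
        (f := fun (u : ℝ) => ∑ i, Complex.normSq (φ u i)) (convex_Ioo 0 ε)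
        (fun u hu => ((key2 u hu).differentiableAt).differentiableWithinAt) ?_ hx hy
      intro u hu
      rw [fderivWithin_of_isOpen hIopen hu]
      have h0 : HasDerivAt (fun t => ∑ i, Complex.normSq (φ t i)) 0 u := by
        have := key2 u hu
        rw [hAzero hu] at this
        simpa using this
      rw [h0.hasFDerivAt.fderiv]
      ext v
      simp
    refine ⟨ε, hε, le_refl ε, ?_⟩
    intro s hs t ht
    unfold hnorm
    rw [hNconst s hs t ht]
end
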